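/- If Y is a vector space, g : Y → {-∞} ∪ ℝ is concave, s : Y → ℝ ∪ {+∞} is convex, and there exists y_s ∈ dom(g) with s(y_s) < 0, then sup{ g(y) : y ∈ Y, s(y) ≤ 0 } = sup{ g(y) : y ∈ Y, s(y) < 0 }. -/

import Mathlib

/-- Slater-type lemma: for a concave objective `g` (valued in `ℝ ∪ {-∞}`) and a convex
constraint `s` (valued in `ℝ ∪ {+∞}`) admitting a point of the domain of `g` where `s < 0`,
the supremum over the non-strict constraint set equals the supremum over the strict one. -/
theorem stmt_0 {Y : Type*} [AddCommGroup Y] [Module ℝ Y]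
    (g : Y → EReal) (s : Y → EReal)
    (hg_ne_top : ∀ y, g y ≠ ⊤)
    (hs_ne_bot : ∀ y, s y ≠ ⊥)
    (hg_concave : ∀ x y : Y, ∀ t : ℝ, t ∈ Set.Icc (0:ℝ) 1 →
      (t : EReal) * g x + ((1 - t : ℝ) : EReal) * g y ≤ g (t • x + (1 - t) • y))
    (hs_convex : ∀ x y : Y, ∀ t : ℝ, t ∈ Set.Icc (0:ℝ) 1 →
      s (t • x + (1 - t) • y) ≤ (t : EReal) * s x + ((1 - t : ℝ) : EReal) * s y)
    (hslater : ∃ y : Y, g y ≠ ⊥ ∧ s y < 0) :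
    sSup {r : EReal | ∃ y : Y, s y ≤ 0 ∧ r = g y} =
      sSup {r : EReal | ∃ y : Y, s y < 0 ∧ r = g y} := by
  obtain ⟨y₀, hgy₀, hsy₀⟩ := hslater
  apply le_antisymm
  · -- main direction
    apply sSup_le
    rintro r ⟨y, hsy, rfl⟩
    by_cases hb : g y = ⊥
    · simp [hb]
    -- g y and g y₀ are real
    lift g y to ℝ using ⟨hg_ne_top y, hb⟩ with b hbeq
    lift g y₀ to ℝ using ⟨hg_ne_top y₀, hgy₀⟩ with a haeq
    -- s y₀ is a negative real
    have hsy₀top : s y₀ ≠ ⊤ := ne_top_of_lt hsy₀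
    lift s y₀ to ℝ using ⟨hsy₀top, hs_ne_bot y₀⟩ with c hceq
    have hc : c < 0 := by exact_mod_cast hsy₀
    -- key : for t ∈ (0,1], the convex combination is in the strict set
    have key : ∀ t : ℝ, t ∈ Set.Ioc (0:ℝ) 1 →
        ((t * a + (1 - t) * b : ℝ) : EReal) ≤
          sSup {r : EReal | ∃ y : Y, s y < 0 ∧ r = g y} := by
      intro t ht
      have ht' : t ∈ Set.Icc (0:ℝ) 1 := ⟨le_of_lt ht.1, ht.2⟩
      set z := t • y₀ + (1 - t) • y with hz
      have hsz : s z < 0 := by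
        refine lt_of_le_of_lt (hs_convex y₀ y t ht') ?_
        rw [← hceq]
        have h1 : (t : EReal) * (c : EReal) = ((t * c : ℝ) : EReal) := by
          rw [EReal.coe_mul]
        have h2 : ((1 - t : ℝ) : EReal) * s y ≤ 0 := by
          rcases eq_or_lt_of_le ht.2 with h | h
          · simp [← h]
          · have h1t : (0:ℝ) < 1 - t := by linarith
            calc ((1 - t : ℝ) : EReal) * s y ≤ ((1 - t : ℝ) : EReal) * 0 := by
                  apply mul_le_mul_of_nonneg_left hsy (by exact_mod_cast h1t.le)
              _ = 0 := by simp
        calc (t : EReal) * (c : EReal) + ((1 - t : ℝ) : EReal) * s y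
            ≤ ((t * c : ℝ) : EReal) + 0 := by rw [h1]; exact add_le_add le_rfl h2
          _ = ((t * c : ℝ) : EReal) := by simp
          _ < 0 := by exact_mod_cast mul_neg_of_pos_of_neg ht.1 hc
      have hgz : ((t * a + (1 - t) * b : ℝ) : EReal) ≤ g z := by
        have := hg_concave y₀ y t ht'
        rw [← haeq, ← hbeq] at this
        calc ((t * a + (1 - t) * b : ℝ) : EReal)
            = (t : EReal) * (a : EReal) + ((1 - t : ℝ) : EReal) * (b : EReal) := by
              push_cast; ring_nf
          _ ≤ g z := this
      exact hgz.trans (le_sSup ⟨z, hsz, rfl⟩)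
    -- pass to the limit t → 0⁺
    have hne : (nhdsWithin (0:ℝ) (Set.Ioc 0 1)).NeBot :=
      left_nhdsWithin_Ioc_neBot one_pos
    have htend : Filter.Tendsto (fun t : ℝ => ((t * a + (1 - t) * b : ℝ) : EReal))
        (nhdsWithin (0:ℝ) (Set.Ioc 0 1)) (nhds ((b : ℝ) : EReal)) := by
      apply Filter.Tendsto.comp (continuous_coe_real_ereal.tendsto b)
      have hcont : Continuous fun t : ℝ => t * a + (1 - t) * b := by continuity
      have : Filter.Tendsto (fun t : ℝ => t * a + (1 - t) * b) (nhds 0) (nhds b) := by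
        simpa using hcont.tendsto 0
      exact this.mono_left nhdsWithin_le_nhds
    exact le_of_tendsto htend (Filter.eventually_of_mem self_mem_nhdsWithin key)
  · exact sSup_le_sSup (fun r ⟨y, h, hr⟩ => ⟨y, h.le, hr⟩)
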